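/- Let ε ∈ (0,1), let a₁, …, aₙ be distinct positive reals with n ≥ 2, and let 0 < δ ≤ (ε/(9n)) · max_i a_i. Define the rounded values ã_i := δ·⌈a_i/δ⌉. Define OPT̃_L as the minimum over all pairs of nonempty disjoint index sets A, B ⊆ {1,…,n} containing some index attaining max_i ã_i of max{Σ_{i∈A} ã_i / Σ_{i∈B} ã_i, Σ_{i∈B} ã_i / Σ_{i∈A} ã_i}. Then OPT̃_L ≤ (1 + ε/9) · OPT_L({a₁,…,aₙ}). -/

import Mathlib

private lemma ratio_round_bound (ε nd SA SB tA tB : ℝ) (hε0 : 0 < ε)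
    (hSA : 0 < SA) (hSB : 0 < SB)
    (htA1 : SA ≤ tA) (htA2 : tA ≤ SA + nd)
    (htB1 : SB ≤ tB) (htB2 : tB ≤ SB + nd)
    (hnd : nd ≤ ε / 9 * SA) :
    max (tA / tB) (tB / tA) ≤ (1 + ε / 9) * max (SA / SB) (SB / SA) := by
  set r := max (SA / SB) (SB / SA) with hr
  have hr1 : 1 ≤ r := by
    rcases le_total SA SB with h | h
    · exact le_trans ((one_le_div hSA).2 h) (le_max_right _ _)
    · exact le_trans ((one_le_div hSB).2 h) (le_max_left _ _)
  have htBpos : 0 < tB := hSB.trans_le htB1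
  have h1 : tA / tB ≤ (1 + ε / 9) * r := by
    calc tA / tB ≤ ((1 + ε / 9) * SA) / SB :=
          div_le_div₀ (by positivity) (by nlinarith) hSB htB1
      _ = (1 + ε / 9) * (SA / SB) := mul_div_assoc _ _ _
      _ ≤ (1 + ε / 9) * r := by
          have := le_max_left (SA / SB) (SB / SA); nlinarith
  have h2 : tB / tA ≤ (1 + ε / 9) * r := by
    calc tB / tA ≤ (SB + nd) / SA := div_le_div₀ (by nlinarith) htB2 hSA htA1
      _ = SB / SA + nd / SA := add_div _ _ _
      _ ≤ r + ε / 9 := add_le_add (le_max_right _ _)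
          (by rw [div_le_iff₀ hSA]; nlinarith)
      _ ≤ (1 + ε / 9) * r := by nlinarith
  exact max_le h1 h2

/-- The ratio `R(X,Y) = max{Σ(X)/Σ(Y), Σ(Y)/Σ(X)}` of two finite sets of reals. -/
noncomputable def ratio (X Y : Finset ℝ) : ℝ :=
  max (X.sum id / Y.sum id) (Y.sum id / X.sum id)

/-- `OPT_L(I)`: the minimum ratio over all nonempty disjoint subsets `X, Y ⊆ I` such that
`max(I) ∈ X ∪ Y` (i.e. some element of `X ∪ Y` is an upper bound of `I`). -/
noncomputable def OPTL (I : Finset ℝ) : ℝ :=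
  sInf {r | ∃ X Y : Finset ℝ, X ⊆ I ∧ Y ⊆ I ∧ Disjoint X Y ∧
    X.Nonempty ∧ Y.Nonempty ∧ (∃ m ∈ X ∪ Y, ∀ x ∈ I, x ≤ m) ∧ r = ratio X Y}

/-- **Rounding II, first part (Lemma 4.11).** Rounding each item up to a multiple of
`δ ≤ (ε/(9n))·max_i a_i` increases the optimum `OPT_L` by at most a factor `1 + ε/9`:
`OPT̃_L ≤ (1 + ε/9) · OPT_L({a₁,…,aₙ})`. -/
theorem rounding_two_opt_bound (ε : ℝ) (hε : ε ∈ Set.Ioo (0 : ℝ) 1)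
    (n : ℕ) (hn : 2 ≤ n) (a : Fin n → ℝ)
    (hinj : Function.Injective a) (hpos : ∀ i, 0 < a i)
    (δ : ℝ) (hδ0 : 0 < δ)
    (hδ : δ ≤ ε / (9 * n) *
      (Finset.univ.sup' ⟨⟨0, by omega⟩, Finset.mem_univ _⟩ a)) :
    sInf {r : ℝ | ∃ A B : Finset (Fin n), A.Nonempty ∧ B.Nonempty ∧ Disjoint A B ∧
        (∃ i ∈ A ∪ B, ∀ j, δ * (⌈a j / δ⌉ : ℝ) ≤ δ * (⌈a i / δ⌉ : ℝ)) ∧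
        r = max ((∑ i ∈ A, δ * (⌈a i / δ⌉ : ℝ)) / (∑ i ∈ B, δ * (⌈a i / δ⌉ : ℝ)))
                ((∑ i ∈ B, δ * (⌈a i / δ⌉ : ℝ)) / (∑ i ∈ A, δ * (⌈a i / δ⌉ : ℝ)))}
      ≤ (1 + ε / 9) * OPTL (Finset.univ.image a) := by
  obtain ⟨hε0, hε1⟩ := hε
  have hne : (Finset.univ : Finset (Fin n)).Nonempty := ⟨⟨0, by omega⟩, Finset.mem_univ _⟩
  set s : Fin n → ℝ := fun i => δ * (⌈a i / δ⌉ : ℝ) with hsdef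
  set M : ℝ := Finset.univ.sup' ⟨⟨0, by omega⟩, Finset.mem_univ _⟩ a with hMdef
  obtain ⟨i0, -, hi0⟩ := Finset.exists_mem_eq_sup' hne a
  have hi0M : M = a i0 := hi0
  have hMmax : ∀ j, a j ≤ M := fun j => Finset.le_sup' a (Finset.mem_univ j)
  have hsle : ∀ i, a i ≤ s i := by
    intro i
    have h := Int.le_ceil (a i / δ)
    have hd : δ * (a i / δ) = a i := by field_simp
    have := mul_le_mul_of_nonneg_left h hδ0.le
    simpa [hsdef, hd] using this
  have hsub : ∀ i, s i ≤ a i + δ := by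
    intro i
    have h := Int.ceil_lt_add_one (a i / δ)
    have hd : δ * (a i / δ) = a i := by field_simp
    have := mul_le_mul_of_nonneg_left h.le hδ0.le
    simp only [hsdef]
    nlinarith
  have hspos : ∀ i, 0 < s i := fun i => (hpos i).trans_le (hsle i)
  have hnd : (n : ℝ) * δ ≤ ε / 9 * M := by
    have hn0 : (0 : ℝ) < n := by positivity
    have := mul_le_mul_of_nonneg_left hδ hn0.le
    have he : (n : ℝ) * (ε / (9 * n) * M) = ε / 9 * M := by field_simp
    linarith [he ▸ this]
  -- the two sets
  set Sset : Set ℝ := {r : ℝ | ∃ A B : Finset (Fin n), A.Nonempty ∧ B.Nonempty ∧ Disjoint A B ∧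
        (∃ i ∈ A ∪ B, ∀ j, δ * (⌈a j / δ⌉ : ℝ) ≤ δ * (⌈a i / δ⌉ : ℝ)) ∧
        r = max ((∑ i ∈ A, δ * (⌈a i / δ⌉ : ℝ)) / (∑ i ∈ B, δ * (⌈a i / δ⌉ : ℝ)))
                ((∑ i ∈ B, δ * (⌈a i / δ⌉ : ℝ)) / (∑ i ∈ A, δ * (⌈a i / δ⌉ : ℝ)))} with hSs
  set I : Finset ℝ := Finset.univ.image a with hI
  set Sopt : Set ℝ := {r | ∃ X Y : Finset ℝ, X ⊆ I ∧ Y ⊆ I ∧ Disjoint X Y ∧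
    X.Nonempty ∧ Y.Nonempty ∧ (∃ m ∈ X ∪ Y, ∀ x ∈ I, x ≤ m) ∧ r = ratio X Y} with hSo
  have hbdd : BddBelow Sset := by
    refine ⟨0, fun x hx => ?_⟩
    obtain ⟨A, B, hA, hB, -, -, rfl⟩ := hx
    have h1 : (0:ℝ) < ∑ i ∈ A, δ * (⌈a i / δ⌉ : ℝ) := Finset.sum_pos (fun i _ => hspos i) hA
    have h2 : (0:ℝ) < ∑ i ∈ B, δ * (⌈a i / δ⌉ : ℝ) := Finset.sum_pos (fun i _ => hspos i) hB
    exact le_trans (div_nonneg h1.le h2.le) (le_max_left _ _)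
  -- Sopt nonempty
  obtain ⟨j1, hj1⟩ := Fintype.exists_ne_of_one_lt_card (by simp; omega) i0
  have hSoptne : Sopt.Nonempty := by
    refine ⟨ratio {a i0} {a j1}, {a i0}, {a j1}, ?_, ?_, ?_, ⟨_, Finset.mem_singleton_self _⟩,
      ⟨_, Finset.mem_singleton_self _⟩, ⟨a i0, ?_, ?_⟩, rfl⟩
    · simp [hI]
    · simp [hI]
    · exact Finset.disjoint_singleton.2 (fun h => hj1 (hinj h.symm))
    · simp
    · intro x hx
      obtain ⟨i, -, rfl⟩ := Finset.mem_image.1 hx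
      rw [← hi0M]; exact hMmax i
  -- key claim
  have key : ∀ r ∈ Sopt, sInf Sset ≤ (1 + ε / 9) * r := by
    rintro r ⟨X, Y, hXI, hYI, hXY, hXne, hYne, ⟨m, hm, hmax⟩, rfl⟩
    set A : Finset (Fin n) := Finset.univ.filter (fun i => a i ∈ X) with hA
    set B : Finset (Fin n) := Finset.univ.filter (fun i => a i ∈ Y) with hB
    have himg : ∀ Z : Finset ℝ, Z ⊆ I →
        (Finset.univ.filter (fun i => a i ∈ Z)).image a = Z := by
      intro Z hZ
      ext x
      simp only [Finset.mem_image, Finset.mem_filter, Finset.mem_univ, true_and]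
      constructor
      · rintro ⟨i, hi, rfl⟩; exact hi
      · intro hx
        obtain ⟨i, -, rfl⟩ := Finset.mem_image.1 (hZ hx)
        exact ⟨i, hx, rfl⟩
    have hsum : ∀ Z : Finset ℝ, Z ⊆ I →
        Z.sum id = ∑ i ∈ Finset.univ.filter (fun i => a i ∈ Z), a i := by
      intro Z hZ
      conv_lhs => rw [← himg Z hZ]
      rw [Finset.sum_image (fun x _ y _ h => hinj h)]
      rfl
    have hXsum := hsum X hXI
    have hYsum := hsum Y hYI
    have hAne : A.Nonempty := by
      obtain ⟨x, hx⟩ := hXne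
      obtain ⟨i, -, rfl⟩ := Finset.mem_image.1 (hXI hx)
      exact ⟨i, by simp [hA, hx]⟩
    have hBne : B.Nonempty := by
      obtain ⟨x, hx⟩ := hYne
      obtain ⟨i, -, rfl⟩ := Finset.mem_image.1 (hYI hx)
      exact ⟨i, by simp [hB, hx]⟩
    have hAB : Disjoint A B := by
      rw [Finset.disjoint_left]
      intro i hiA hiB
      rw [hA, Finset.mem_filter] at hiA
      rw [hB, Finset.mem_filter] at hiB
      exact Finset.disjoint_left.1 hXY hiA.2 hiB.2
    -- max element
    have hmI : m ∈ I := by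
      rcases Finset.mem_union.1 hm with h | h
      exacts [hXI h, hYI h]
    obtain ⟨i1, -, hi1⟩ := Finset.mem_image.1 hmI
    have hmM : m = M := le_antisymm (hi1 ▸ hMmax i1) (hmax M (by rw [hi0M, hI]; exact Finset.mem_image_of_mem a (Finset.mem_univ i0)))
    have hi1mem : i1 ∈ A ∪ B := by
      rcases Finset.mem_union.1 hm with h | h
      · exact Finset.mem_union_left _ (by simp [hA, hi1 ▸ h])
      · exact Finset.mem_union_right _ (by simp [hB, hi1 ▸ h])
    have hi1max : ∀ j, δ * (⌈a j / δ⌉ : ℝ) ≤ δ * (⌈a i1 / δ⌉ : ℝ) := by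
      intro j
      have haj : a j ≤ a i1 := hi1 ▸ hmax (a j) (Finset.mem_image_of_mem a (Finset.mem_univ j))
      have : (⌈a j / δ⌉ : ℤ) ≤ ⌈a i1 / δ⌉ := Int.ceil_le_ceil (by gcongr)
      exact mul_le_mul_of_nonneg_left (by exact_mod_cast this) hδ0.le
    -- sums
    set SA := ∑ i ∈ A, a i with hSA
    set SB := ∑ i ∈ B, a i with hSB
    set tA := ∑ i ∈ A, s i with htA
    set tB := ∑ i ∈ B, s i with htB
    have hSApos : 0 < SA := Finset.sum_pos (fun i _ => hpos i) hAne
    have hSBpos : 0 < SB := Finset.sum_pos (fun i _ => hpos i) hBne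
    have hle : ∀ C : Finset (Fin n), (∑ i ∈ C, a i) ≤ ∑ i ∈ C, s i :=
      fun C => Finset.sum_le_sum (fun i _ => hsle i)
    have hub : ∀ C : Finset (Fin n), (∑ i ∈ C, s i) ≤ (∑ i ∈ C, a i) + n * δ := by
      intro C
      have h1 : (∑ i ∈ C, s i) ≤ ∑ i ∈ C, (a i + δ) := Finset.sum_le_sum (fun i _ => hsub i)
      have h2 : (∑ i ∈ C, (a i + δ)) = (∑ i ∈ C, a i) + C.card * δ := by
        rw [Finset.sum_add_distrib, Finset.sum_const, nsmul_eq_mul]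
      have h3 : (C.card : ℝ) ≤ n := by
        exact_mod_cast (C.card_le_univ.trans_eq (by simp))
      nlinarith
    -- membership in Sset
    have hmem : max (tA / tB) (tB / tA) ∈ Sset := by
      refine ⟨A, B, hAne, hBne, hAB, ⟨i1, hi1mem, hi1max⟩, ?_⟩
      simp [htA, htB, hsdef]
    have hrw : ratio X Y = max (SA / SB) (SB / SA) := by
      rw [ratio, hXsum, hYsum]
    refine le_trans (csInf_le hbdd hmem) ?_
    rw [hrw]
    have hMa : M = a i1 := by rw [hi1, hmM]
    -- which side has the max
    rcases Finset.mem_union.1 hm with h | h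
    · have hi1A : i1 ∈ A := by simp [hA, hi1 ▸ h]
      have hMSA : M ≤ SA := hMa ▸ Finset.single_le_sum (fun i _ => (hpos i).le) hi1A
      exact ratio_round_bound ε ((n:ℝ)*δ) SA SB tA tB hε0 hSApos hSBpos (hle A) (hub A)
        (hle B) (hub B) (by nlinarith)
    · have hi1B : i1 ∈ B := by simp [hB, hi1 ▸ h]
      have hMSB : M ≤ SB := hMa ▸ Finset.single_le_sum (fun i _ => (hpos i).le) hi1B
      rw [max_comm (tA/tB), max_comm (SA/SB)]
      exact ratio_round_bound ε ((n:ℝ)*δ) SB SA tB tA hε0 hSBpos hSApos (hle B) (hub B)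
        (hle A) (hub A) (by nlinarith)
  have h19 : (0:ℝ) < 1 + ε / 9 := by linarith
  have hfin : sInf Sset / (1 + ε / 9) ≤ sInf Sopt := by
    refine le_csInf hSoptne (fun r hr => ?_)
    rw [div_le_iff₀ h19, mul_comm]
    exact key r hr
  rw [div_le_iff₀ h19] at hfin
  rw [show OPTL I = sInf Sopt from rfl]
  linarith [hfin, mul_comm (sInf Sopt) (1 + ε / 9)]
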